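/- Let (y_i)_{0≤i≤n} be from Model (1), (z_i) the recursively defined process, and (ρ̄_n) random variables with |ρ̄_n − ρ*| = O_P(n^{−1/2}). Set w̄ = z − ρ̄_n Bz ∈ ℝⁿ and Δ̄ = (Δ̄_i)_{1≤i≤n} with Δ̄_i = Δ*_i + (ρ* − ρ̄_n)(z_{i−1} − y_{i−1}). Then sup_{t ∈ A_{n,m}} | J_n(Δ̄, t) − (2/n)( ⟨π_{E_{t*_n}}(w̄), π_{E_{t*_n}}(Δ̄)⟩ − ⟨π_{E_t}(w̄), π_{E_t}(Δ̄)⟩ ) | = O_P(n^{−1/2}). -/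

import Mathlib

open MeasureTheory ProbabilityTheory Filter
open scoped RealInnerProductSpace

noncomputable section

/-- `X n = O_P(a n)`: for every `ε > 0` there are `M > 0` and `N` such that
`P(|X n| > M * a n) ≤ ε` for all `n ≥ N`. -/
def IsBigOP {Ω : Type*} [MeasurableSpace Ω] (P : Measure Ω)
    (X : ℕ → Ω → ℝ) (a : ℕ → ℝ) : Prop :=
  ∀ ε : ℝ, 0 < ε → ∃ M : ℝ, 0 < M ∧ ∃ N : ℕ, ∀ n, N ≤ n →
    (P {ω | M * a n < |X n ω|}).toReal ≤ ε

/-- `A_{n,m}`: admissible change-point configurations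
`0 = t_0 < t_1 < ⋯ < t_m < t_{m+1} = n`. -/
def Anm (n m : ℕ) : Set (Fin (m + 2) → ℕ) :=
  {t | t 0 = 0 ∧ t (Fin.last (m + 1)) = n ∧ StrictMono t}

/-- the indicator vector of the `k`-th segment `(t_k, t_{k+1}]` (coordinates `1,…,n`). -/
def segVec (n m : ℕ) (t : Fin (m + 2) → ℕ) (k : Fin (m + 1)) :
    EuclideanSpace ℝ (Fin n) :=
  WithLp.toLp 2 (fun i => if t k.castSucc < (i : ℕ) + 1 ∧ (i : ℕ) + 1 ≤ t k.succ then 1 else 0)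

/-- the linear span `E_t` of the segment indicator vectors. -/
def Esp (n m : ℕ) (t : Fin (m + 2) → ℕ) : Submodule ℝ (EuclideanSpace ℝ (Fin n)) :=
  Submodule.span ℝ (Set.range (segVec n m t))

/-- orthogonal projection `π_{E_t}` of `ℝⁿ` onto `E_t`. -/
def projE (n m : ℕ) (t : Fin (m + 2) → ℕ) (x : EuclideanSpace ℝ (Fin n)) :
    EuclideanSpace ℝ (Fin n) :=
  (Submodule.orthogonalProjectionOnto (Esp n m t) x : EuclideanSpace ℝ (Fin n))

/-- `x = (x_1, …, x_n)`. -/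
def vecOf (n : ℕ) (x : ℕ → ℝ) : EuclideanSpace ℝ (Fin n) :=
  WithLp.toLp 2 (fun i => x ((i : ℕ) + 1))

/-- `Bx = (x_0, …, x_{n-1})`. -/
def bvecOf (n : ℕ) (x : ℕ → ℝ) : EuclideanSpace ℝ (Fin n) :=
  WithLp.toLp 2 (fun i => x (i : ℕ))

/-- the decorrelated vector `x - ρ Bx`. -/
def decor (n : ℕ) (x : ℕ → ℝ) (r : ℝ) : EuclideanSpace ℝ (Fin n) :=
  vecOf n x - r • bvecOf n x

/-- `J_n(x, t) = (1/n)(‖π_{E_{t*}} x‖² - ‖π_{E_t} x‖²)`. -/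
def Jn (n m : ℕ) (tstar t : Fin (m + 2) → ℕ) (x : EuclideanSpace ℝ (Fin n)) : ℝ :=
  (‖projE n m tstar x‖ ^ 2 - ‖projE n m t x‖ ^ 2) / n

/-- `K_n(x, t) = (1/n)‖(π_{E_{t*}} - π_{E_t}) 𝔼x‖²`. -/
def Kn (n m : ℕ) (tstar t : Fin (m + 2) → ℕ) (Ex : EuclideanSpace ℝ (Fin n)) : ℝ :=
  ‖projE n m tstar Ex - projE n m t Ex‖ ^ 2 / n

/-- `V_n(x, t)`. -/
def Vn (n m : ℕ) (tstar t : Fin (m + 2) → ℕ) (x Ex : EuclideanSpace ℝ (Fin n)) : ℝ :=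
  (‖projE n m tstar (x - Ex)‖ ^ 2 - ‖projE n m t (x - Ex)‖ ^ 2) / n

/-- `W_n(x, t)`. -/
def Wn (n m : ℕ) (tstar t : Fin (m + 2) → ℕ) (x Ex : EuclideanSpace ℝ (Fin n)) : ℝ :=
  2 * (⟪projE n m tstar (x - Ex), projE n m tstar Ex⟫ -
       ⟪projE n m t (x - Ex), projE n m t Ex⟫) / n

/-- `C'_{ν,γ,n,m}(I)`: admissible configurations `t` with
`ν λ̲⁻² ≤ ‖t - t*‖ ≤ n γ Δ_{τ*}`, `t_k ≥ t*_k` for all `k`,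
`ν λ̲⁻² ≤ t_k - t*_k ≤ n γ Δ_{τ*}` for `k ∈ I` and `t_k - t*_k < ν λ̲⁻²` for `k ∉ I`. -/
def CprimeI (n m : ℕ) (tstar : Fin (m + 2) → ℕ) (lamb Dtau ν γ : ℝ)
    (I : Set (Fin m)) : Set (Fin (m + 2) → ℕ) :=
  {t | t ∈ Anm n m ∧
    ν / lamb ^ 2 ≤
      Real.sqrt (∑ k : Fin m,
        ((t k.castSucc.succ : ℝ) - (tstar k.castSucc.succ : ℝ)) ^ 2) ∧
    Real.sqrt (∑ k : Fin m,
        ((t k.castSucc.succ : ℝ) - (tstar k.castSucc.succ : ℝ)) ^ 2) ≤ n * γ * Dtau ∧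
    (∀ k : Fin m, tstar k.castSucc.succ ≤ t k.castSucc.succ) ∧
    (∀ k : Fin m, k ∈ I →
      ν / lamb ^ 2 ≤ (t k.castSucc.succ : ℝ) - (tstar k.castSucc.succ : ℝ) ∧
      (t k.castSucc.succ : ℝ) - (tstar k.castSucc.succ : ℝ) ≤ n * γ * Dtau) ∧
    (∀ k : Fin m, k ∉ I →
      (t k.castSucc.succ : ℝ) - (tstar k.castSucc.succ : ℝ) < ν / lamb ^ 2)}

open scoped NNReal ENNReal

section AuxLemmas

lemma projE_norm_le (n m : ℕ) (t : Fin (m + 2) → ℕ) (x : EuclideanSpace ℝ (Fin n)) :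
    ‖projE n m t x‖ ≤ ‖x‖ := by
  have h1 := (Submodule.orthogonalProjectionOnto (Esp n m t)).le_opNorm x
  have h2 := Submodule.orthogonalProjectionOnto_norm_le (Esp n m t)
  have h3 : ‖projE n m t x‖ = ‖Submodule.orthogonalProjectionOnto (Esp n m t) x‖ := rfl
  rw [h3]
  calc ‖Submodule.orthogonalProjectionOnto (Esp n m t) x‖ ≤ ‖Submodule.orthogonalProjectionOnto (Esp n m t)‖ * ‖x‖ := h1
    _ ≤ 1 * ‖x‖ := mul_le_mul_of_nonneg_right h2 (norm_nonneg x)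
    _ = ‖x‖ := one_mul _

lemma per_t_bound (n m : ℕ) (tstar t : Fin (m + 2) → ℕ)
    (x w : EuclideanSpace ℝ (Fin n)) :
    |Jn n m tstar t x -
      2 / n * (⟪projE n m tstar w, projE n m tstar x⟫ - ⟪projE n m t w, projE n m t x⟫)| ≤
    (2 * ‖x‖ ^ 2 + 4 * ‖w‖ * ‖x‖) / n := by
  by_cases hn : (n : ℝ) = 0
  · simp [Jn, hn]
  have hn0 : (0:ℝ) < n := lt_of_le_of_ne (Nat.cast_nonneg n) (Ne.symm hn)
  have key : Jn n m tstar t x -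
      2 / n * (⟪projE n m tstar w, projE n m tstar x⟫ - ⟪projE n m t w, projE n m t x⟫) =
      ((‖projE n m tstar x‖ ^ 2 - ‖projE n m t x‖ ^ 2) -
        2 * (⟪projE n m tstar w, projE n m tstar x⟫ - ⟪projE n m t w, projE n m t x⟫)) / n := by
    rw [Jn]; ring
  rw [key, abs_div, abs_of_pos hn0]
  rw [div_le_div_iff_of_pos_right hn0]
  have ha1 : ‖projE n m tstar x‖ ^ 2 ≤ ‖x‖ ^ 2 :=
    pow_le_pow_left₀ (norm_nonneg _) (projE_norm_le n m tstar x) 2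
  have ha2 : ‖projE n m t x‖ ^ 2 ≤ ‖x‖ ^ 2 :=
    pow_le_pow_left₀ (norm_nonneg _) (projE_norm_le n m t x) 2
  have ha1' : (0:ℝ) ≤ ‖projE n m tstar x‖ ^ 2 := sq_nonneg _
  have ha2' : (0:ℝ) ≤ ‖projE n m t x‖ ^ 2 := sq_nonneg _
  have hb1 : |⟪projE n m tstar w, projE n m tstar x⟫| ≤ ‖w‖ * ‖x‖ := by
    refine (abs_real_inner_le_norm _ _).trans ?_
    exact mul_le_mul (projE_norm_le n m tstar w) (projE_norm_le n m tstar x)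
      (norm_nonneg _) (norm_nonneg _)
  have hb2 : |⟪projE n m t w, projE n m t x⟫| ≤ ‖w‖ * ‖x‖ := by
    refine (abs_real_inner_le_norm _ _).trans ?_
    exact mul_le_mul (projE_norm_le n m t w) (projE_norm_le n m t x)
      (norm_nonneg _) (norm_nonneg _)
  rw [abs_le] at hb1 hb2 ⊢
  obtain ⟨hb1l, hb1r⟩ := hb1
  obtain ⟨hb2l, hb2r⟩ := hb2
  constructor <;> nlinarith

lemma norm_le_sqrt_of_sq_sum {n : ℕ} (v : EuclideanSpace ℝ (Fin n)) (S : ℝ)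
    (h : ∑ i : Fin n, (v i) ^ 2 ≤ S) : ‖v‖ ≤ Real.sqrt S := by
  rw [EuclideanSpace.norm_eq]
  apply Real.sqrt_le_sqrt
  simpa [Real.norm_eq_abs, sq_abs] using h

lemma norm_le_of_coord {n : ℕ} (v : EuclideanSpace ℝ (Fin n)) (b : ℝ) (hb : 0 ≤ b)
    (h : ∀ i, |v i| ≤ b) : ‖v‖ ≤ Real.sqrt n * b := by
  have h' : ‖v‖ ≤ Real.sqrt (n * b ^ 2) := by
    apply norm_le_sqrt_of_sq_sum
    calc ∑ i : Fin n, (v i) ^ 2 ≤ ∑ _i : Fin n, b ^ 2 := by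
          apply Finset.sum_le_sum
          intro i _
          calc (v i) ^ 2 = |v i| ^ 2 := (sq_abs _).symm
            _ ≤ b ^ 2 := pow_le_pow_left₀ (abs_nonneg _) (h i) 2
      _ = n * b ^ 2 := by simp [mul_comm]
  rwa [Real.sqrt_mul (Nat.cast_nonneg n), Real.sqrt_sq hb] at h'

lemma exists_seg {m n : ℕ} (f : Fin (m + 2) → ℕ) (h0 : f 0 = 0)
    (hlast : f (Fin.last (m + 1)) = n)
    (i : ℕ) (h1 : 0 < i) (h2 : i ≤ n) :
    ∃ k : Fin (m + 1), f k.castSucc < i ∧ i ≤ f k.succ := by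
  classical
  set T : Finset (Fin (m + 2)) := Finset.univ.filter (fun j => f j < i) with hT
  have hne : T.Nonempty := ⟨0, by simp [hT, h0, h1]⟩
  set j₀ := T.max' hne with hj₀def
  have hj₀ : f j₀ < i := (Finset.mem_filter.1 (T.max'_mem hne)).2
  have hj₀lt : (j₀ : ℕ) < m + 1 := by
    by_contra h
    have hlast2 : j₀ = Fin.last (m + 1) := by
      apply Fin.ext
      have := j₀.isLt
      simp only [Fin.val_last]
      omega
    rw [hlast2, hlast] at hj₀
    omega
  refine ⟨⟨(j₀ : ℕ), hj₀lt⟩, ?_, ?_⟩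
  · have hcs : (⟨(j₀ : ℕ), hj₀lt⟩ : Fin (m + 1)).castSucc = j₀ := by
      apply Fin.ext; simp
    rw [hcs]; exact hj₀
  · by_contra h
    push_neg at h
    have hmem : (⟨(j₀ : ℕ), hj₀lt⟩ : Fin (m + 1)).succ ∈ T := by
      simp only [hT, Finset.mem_filter, Finset.mem_univ, true_and]
      exact h
    have hle := T.le_max' _ hmem
    rw [← hj₀def] at hle
    have hv : ((⟨(j₀ : ℕ), hj₀lt⟩ : Fin (m + 1)).succ : ℕ) = (j₀ : ℕ) + 1 := rfl
    rw [Fin.le_def, hv] at hle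
    omega

lemma gauss_sq_lt_top (μ0 : ℝ) (v : ℝ≥0) :
    ∫⁻ x, (‖x‖₊ : ℝ≥0∞) ^ 2 ∂(gaussianReal μ0 v) < ∞ := by
  by_cases hv : v = 0
  · rw [hv, gaussianReal_zero_var]
    rw [lintegral_dirac]
    exact ENNReal.pow_lt_top (ENNReal.coe_lt_top)
  · rw [gaussianReal_of_var_ne_zero _ hv,
      lintegral_withDensity_eq_lintegral_mul _ (measurable_gaussianPDF _ _)
        (measurable_nnnorm.coe_nnreal_ennreal.pow_const 2)]
    have hb : (0:ℝ) < (2 * (v:ℝ))⁻¹ := by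
      have : (0:ℝ) < (v:ℝ) := lt_of_le_of_ne (v.coe_nonneg) (by exact_mod_cast Ne.symm hv)
      positivity
    set b : ℝ := (2 * (v:ℝ))⁻¹ with hbdef
    have h2 : Integrable (fun t : ℝ => t ^ 2 * Real.exp (-b * t ^ 2)) := by
      have h2' := integrable_rpow_mul_exp_neg_mul_sq hb (show (-1:ℝ) < 2 by norm_num)
      have heq : (fun t : ℝ => t ^ (2:ℝ) * Real.exp (-b * t ^ 2)) =
          fun t : ℝ => t ^ 2 * Real.exp (-b * t ^ 2) := by
        funext t
        rw [show (2:ℝ) = ((2:ℕ):ℝ) by norm_num, Real.rpow_natCast]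
      rwa [heq] at h2'
    have h1 : Integrable (fun t : ℝ => t * Real.exp (-b * t ^ 2)) :=
      integrable_mul_exp_neg_mul_sq hb
    have h0 : Integrable (fun t : ℝ => Real.exp (-b * t ^ 2)) :=
      integrable_exp_neg_mul_sq hb
    set c : ℝ := (Real.sqrt (2 * Real.pi * v))⁻¹ with hcdef
    have hint : Integrable (fun x : ℝ => gaussianPDFReal μ0 v x * x ^ 2) := by
      have hF : Integrable (fun x : ℝ =>
          c * ((x - μ0) ^ 2 * Real.exp (-b * (x - μ0) ^ 2)
            + 2 * μ0 * ((x - μ0) * Real.exp (-b * (x - μ0) ^ 2))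
            + μ0 ^ 2 * Real.exp (-b * (x - μ0) ^ 2))) := by
        apply Integrable.const_mul
        exact ((h2.comp_sub_right μ0).add ((h1.comp_sub_right μ0).const_mul (2 * μ0))).add
          ((h0.comp_sub_right μ0).const_mul (μ0 ^ 2))
      refine hF.congr (Filter.Eventually.of_forall fun x => ?_)
      simp only [gaussianPDFReal_def]
      rw [← hcdef, hbdef]
      ring_nf
    refine lt_of_le_of_lt (le_of_eq ?_) hint.lintegral_lt_top
    apply lintegral_congr
    intro x
    simp only [Pi.mul_apply, gaussianPDF]
    rw [← enorm_eq_nnnorm, Real.enorm_eq_ofReal_abs, ← ENNReal.ofReal_pow (abs_nonneg _), sq_abs,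
      ← ENNReal.ofReal_mul (gaussianPDFReal_nonneg _ _ _)]

lemma sq_eLpNorm_two {Ω : Type*} [MeasurableSpace Ω] (P : Measure Ω) (f : Ω → ℝ) :
    (eLpNorm f 2 P) ^ 2 = ∫⁻ ω, (‖f ω‖₊ : ℝ≥0∞) ^ 2 ∂P := by
  rw [eLpNorm_eq_lintegral_rpow_enorm_toReal two_ne_zero ENNReal.ofNat_ne_top]
  simp only [ENNReal.toReal_ofNat, enorm_eq_nnnorm]
  rw [← ENNReal.rpow_natCast _ 2, ← ENNReal.rpow_mul]
  norm_num

lemma lintegral_sq_map {Ω : Type*} [MeasurableSpace Ω] (P : Measure Ω) (f : Ω → ℝ)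
    (hf : Measurable f) (μ0 : ℝ) (v : ℝ≥0) (h : P.map f = gaussianReal μ0 v) :
    ∫⁻ ω, (‖f ω‖₊ : ℝ≥0∞) ^ 2 ∂P = ∫⁻ x, (‖x‖₊ : ℝ≥0∞) ^ 2 ∂(gaussianReal μ0 v) := by
  rw [← h, lintegral_map (measurable_nnnorm.coe_nnreal_ennreal.pow_const 2) hf]

lemma isup_abs_bound {α : Type*} (g : α → ℝ) (S : Set α) (B : ℝ) (hB : 0 ≤ B)
    (h : ∀ t, |g t| ≤ B) : |(⨆ t, ⨆ _ : t ∈ S, |g t|)| ≤ B := by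
  have h0 : 0 ≤ ⨆ t, ⨆ _ : t ∈ S, |g t| :=
    Real.iSup_nonneg fun t => Real.iSup_nonneg fun _ => abs_nonneg _
  rw [abs_of_nonneg h0]
  exact Real.iSup_le (fun t => Real.iSup_le (fun _ => h t) hB) hB

end AuxLemmas

set_option maxHeartbeats 1000000 in
theorem stmt_16
    {Ω : Type*} [MeasurableSpace Ω] (P : Measure Ω) [IsProbabilityMeasure P]
    (m : ℕ) (hm : 1 ≤ m)
    (σ : ℝ) (hσ : 0 < σ)
    (ρ : ℝ) (hρ₁ : -1 < ρ) (hρ₂ : ρ < 1)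
    (μ : Fin (m + 1) → ℝ)
    (τ : Fin (m + 2) → ℝ) (hτ0 : τ 0 = 0) (hτ1 : τ (Fin.last (m + 1)) = 1)
    (hτmono : StrictMono τ)
    (tstar : ℕ → Fin (m + 2) → ℕ)
    (htstardef : ∀ n k, tstar n k = ⌊(n : ℝ) * τ k⌋₊)
    (ε : ℕ → Ω → ℝ) (hεmeas : ∀ i, Measurable (ε i))
    (η : ℕ → Ω → ℝ) (hηmeas : Measurable (η 0))
    (hηrec : ∀ i : ℕ, ∀ ω, η (i + 1) ω = ρ * η i ω + ε (i + 1) ω)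
    (hindep : iIndepFun
      (fun i : ℕ => if i = 0 then η 0 else ε i) P)
    (hεdist : ∀ i : ℕ, 1 ≤ i → P.map (ε i) = gaussianReal 0 (σ ^ 2).toNNReal)
    (hηdist : P.map (η 0) = gaussianReal 0 ((σ ^ 2) / (1 - ρ ^ 2)).toNNReal)
    (y : ℕ → ℕ → Ω → ℝ)
    (hy0 : ∀ n ω, y n 0 ω = μ 0 + η 0 ω)
    (hyseg : ∀ n, ∀ k : Fin (m + 1), ∀ i : ℕ,
      tstar n k.castSucc < i → i ≤ tstar n k.succ →
      ∀ ω, y n i ω = μ k + η i ω)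
    (Δs : ℕ → ℕ → ℝ)
    (hΔ1 : ∀ n, ∀ k : Fin m, Δs n (tstar n k.castSucc.succ + 1) =
      -ρ * (μ k.succ - μ k.castSucc))
    (hΔ2 : ∀ n i, (∀ k : Fin m, i ≠ tstar n k.castSucc.succ + 1) → Δs n i = 0)
    (z : ℕ → ℕ → Ω → ℝ)
    (hz0 : ∀ n ω, z n 0 ω = y n 0 ω)
    (hzrec : ∀ n, ∀ i : ℕ, ∀ ω, z n (i + 1) ω =
      ((y n (i + 1) ω - ρ * y n i ω) + Δs n (i + 1)) + ρ * z n i ω)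
    (ρbar : ℕ → Ω → ℝ) (hρbarmeas : ∀ n, Measurable (ρbar n))
    (hρbar : IsBigOP P (fun n ω => ρbar n ω - ρ) (fun n => 1 / Real.sqrt n))
 :
    IsBigOP P (fun n ω => ⨆ t ∈ Anm n m,
      |Jn n m (tstar n) t (vecOf n (fun i =>
        Δs n i + (ρ - ρbar n ω) * (z n (i - 1) ω - y n (i - 1) ω))) -
        2 / n * (⟪projE n m (tstar n) (decor n (fun i => z n i ω) (ρbar n ω)),
            projE n m (tstar n) (vecOf n (fun i =>
        Δs n i + (ρ - ρbar n ω) * (z n (i - 1) ω - y n (i - 1) ω)))⟫ -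
          ⟪projE n m t (decor n (fun i => z n i ω) (ρbar n ω)),
            projE n m t (vecOf n (fun i =>
        Δs n i + (ρ - ρbar n ω) * (z n (i - 1) ω - y n (i - 1) ω)))⟫)|)
      (fun n => 1 / Real.sqrt n) := by
  classical
  intro e he
  -- measurability of η i
  have hηm : ∀ i, Measurable (η i) := by
    intro i
    induction i with
    | zero => exact hηmeas
    | succ i ih =>
      have hfn : η (i + 1) = fun ω => ρ * η i ω + ε (i + 1) ω := funext fun ω => hηrec i ω
      rw [hfn]; exact (ih.const_mul ρ).add (hεmeas _)
  -- basic constants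
  set a : ℝ := |ρ| with hadef
  have ha1 : a < 1 := abs_lt.2 ⟨hρ₁, hρ₂⟩
  have ha0 : 0 ≤ a := abs_nonneg ρ
  have h1a : (0:ℝ) < 1 - a := by linarith
  set A₀ : ℝ := |ρ| * ∑ k : Fin m, |μ k.succ - μ k.castSucc| with hA₀def
  have hA₀0 : 0 ≤ A₀ := mul_nonneg (abs_nonneg _) (Finset.sum_nonneg fun _ _ => abs_nonneg _)
  set Cd : ℝ := A₀ / (1 - a) with hCddef
  have hCd0 : 0 ≤ Cd := div_nonneg hA₀0 h1a.le
  set Mμ : ℝ := ∑ k : Fin (m + 1), |μ k| with hMμdef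
  have hMμ0 : 0 ≤ Mμ := Finset.sum_nonneg fun _ _ => abs_nonneg _
  -- second moments of the noise
  have hη0fin : ∫⁻ ω, (‖η 0 ω‖₊ : ℝ≥0∞) ^ 2 ∂P < ∞ := by
    rw [lintegral_sq_map P _ hηmeas _ _ hηdist]; exact gauss_sq_lt_top _ _
  have hε1fin : ∫⁻ ω, (‖ε 1 ω‖₊ : ℝ≥0∞) ^ 2 ∂P < ∞ := by
    rw [lintegral_sq_map P _ (hεmeas 1) _ _ (hεdist 1 le_rfl)]; exact gauss_sq_lt_top _ _
  have he0top : eLpNorm (η 0) 2 P ≠ ∞ := by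
    intro h
    rw [← sq_eLpNorm_two, h, ENNReal.top_pow (by norm_num : (2:ℕ) ≠ 0)] at hη0fin
    exact lt_irrefl _ hη0fin
  have heεtop : eLpNorm (ε 1) 2 P ≠ ∞ := by
    intro h
    rw [← sq_eLpNorm_two, h, ENNReal.top_pow (by norm_num : (2:ℕ) ≠ 0)] at hε1fin
    exact lt_irrefl _ hε1fin
  set c0 : ℝ := (eLpNorm (η 0) 2 P).toReal with hc0def
  set cε : ℝ := (eLpNorm (ε 1) 2 P).toReal with hcεdef
  have hc00 : 0 ≤ c0 := ENNReal.toReal_nonneg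
  have hcε0 : 0 ≤ cε := ENNReal.toReal_nonneg
  set cc : ℝ := c0 + cε / (1 - a) with hccdef
  have hcc0 : 0 ≤ cc := by
    have := div_nonneg hcε0 h1a.le
    rw [hccdef]; linarith
  have he0 : eLpNorm (η 0) 2 P = ENNReal.ofReal c0 := (ENNReal.ofReal_toReal he0top).symm
  have heε1 : eLpNorm (ε 1) 2 P = ENNReal.ofReal cε := (ENNReal.ofReal_toReal heεtop).symm
  have hrt : ∀ x : ℝ≥0∞, (x ^ (2:ℕ)) ^ ((2:ℝ)⁻¹) = x := by
    intro x
    rw [← ENNReal.rpow_natCast x 2, ← ENNReal.rpow_mul]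
    norm_num
  have hεeq : ∀ i, 1 ≤ i → eLpNorm (ε i) 2 P = ENNReal.ofReal cε := by
    intro i hi
    have h1 : (eLpNorm (ε i) 2 P) ^ 2 = (eLpNorm (ε 1) 2 P) ^ 2 := by
      rw [sq_eLpNorm_two, sq_eLpNorm_two,
        lintegral_sq_map P _ (hεmeas i) _ _ (hεdist i hi),
        lintegral_sq_map P _ (hεmeas 1) _ _ (hεdist 1 le_rfl)]
    calc eLpNorm (ε i) 2 P = ((eLpNorm (ε i) 2 P) ^ (2:ℕ)) ^ ((2:ℝ)⁻¹) := (hrt _).symm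
      _ = ((eLpNorm (ε 1) 2 P) ^ (2:ℕ)) ^ ((2:ℝ)⁻¹) := by rw [h1]
      _ = eLpNorm (ε 1) 2 P := hrt _
      _ = ENNReal.ofReal cε := heε1
  -- uniform L² bound on η i
  have hEb : ∀ i, eLpNorm (η i) 2 P ≤ ENNReal.ofReal cc := by
    intro i
    induction i with
    | zero =>
      rw [he0]
      apply ENNReal.ofReal_le_ofReal
      have := div_nonneg hcε0 h1a.le
      rw [hccdef]; linarith
    | succ i ih =>
      have hfn : η (i + 1) = ρ • η i + ε (i + 1) := by
        funext ω
        simp only [Pi.add_apply, Pi.smul_apply, smul_eq_mul]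
        exact hηrec i ω
      calc eLpNorm (η (i + 1)) 2 P = eLpNorm (ρ • η i + ε (i + 1)) 2 P := by rw [hfn]
        _ ≤ eLpNorm (ρ • η i) 2 P + eLpNorm (ε (i + 1)) 2 P :=
            eLpNorm_add_le ((hηm i).aestronglyMeasurable.const_smul ρ)
              (hεmeas _).aestronglyMeasurable one_le_two
        _ = (‖ρ‖₊ : ℝ≥0∞) * eLpNorm (η i) 2 P + eLpNorm (ε (i + 1)) 2 P := by
            rw [eLpNorm_const_smul, enorm_eq_nnnorm]
        _ ≤ ENNReal.ofReal a * ENNReal.ofReal cc + ENNReal.ofReal cε := by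
            apply add_le_add
            · apply mul_le_mul' _ ih
              rw [← enorm_eq_nnnorm, Real.enorm_eq_ofReal_abs]
            · rw [hεeq (i + 1) (Nat.le_add_left 1 i)]
        _ = ENNReal.ofReal (a * cc + cε) := by
            rw [← ENNReal.ofReal_mul ha0, ← ENNReal.ofReal_add (mul_nonneg ha0 hcc0) hcε0]
        _ ≤ ENNReal.ofReal cc := by
            apply ENNReal.ofReal_le_ofReal
            have hu0 : 0 ≤ cε / (1 - a) := div_nonneg hcε0 h1a.le
            have hu : cε = (cε / (1 - a)) * (1 - a) := by field_simp
            rw [hccdef]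
            nlinarith
  -- Markov constant
  set M₂ : ℝ := 2 * cc / Real.sqrt e + 1 with hM₂def
  have hM₂ : 0 < M₂ := by
    have : 0 ≤ 2 * cc / Real.sqrt e := by positivity
    rw [hM₂def]; linarith
  have hM₂sq : 4 * cc ^ 2 / e ≤ M₂ ^ 2 := by
    have hx0 : 0 ≤ 2 * cc / Real.sqrt e := by positivity
    have hxsq : (2 * cc / Real.sqrt e) ^ 2 = 4 * cc ^ 2 / e := by
      rw [div_pow, Real.sq_sqrt he.le]; ring
    rw [hM₂def]
    nlinarith
  clear_value a A₀ Cd Mμ c0 cε cc M₂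
  -- Markov bound
  have hA2 : ∀ n : ℕ, 1 ≤ n →
      (P {ω | ENNReal.ofReal (M₂ ^ 2 * n) ≤
        ∑ i ∈ Finset.range (n + 1), (‖η i ω‖₊ : ℝ≥0∞) ^ 2}).toReal ≤ e / 2 := by
    intro n hn
    have hn0 : (0:ℝ) < n := by exact_mod_cast hn
    have hmeas : ∀ i ∈ Finset.range (n + 1),
        Measurable (fun ω => (‖η i ω‖₊ : ℝ≥0∞) ^ 2) :=
      fun i _ => ((hηm i).nnnorm.coe_nnreal_ennreal).pow_const 2
    have htot : ∫⁻ ω, ∑ i ∈ Finset.range (n + 1), (‖η i ω‖₊ : ℝ≥0∞) ^ 2 ∂P ≤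
        (n + 1 : ℝ≥0∞) * ENNReal.ofReal (cc ^ 2) := by
      rw [lintegral_finset_sum _ hmeas]
      calc ∑ i ∈ Finset.range (n + 1), ∫⁻ ω, (‖η i ω‖₊ : ℝ≥0∞) ^ 2 ∂P
          ≤ ∑ _i ∈ Finset.range (n + 1), ENNReal.ofReal (cc ^ 2) := by
            apply Finset.sum_le_sum
            intro i _
            rw [← sq_eLpNorm_two]
            calc (eLpNorm (η i) 2 P) ^ 2 ≤ (ENNReal.ofReal cc) ^ 2 := pow_le_pow_left' (hEb i) 2
              _ = ENNReal.ofReal (cc ^ 2) := by rw [← ENNReal.ofReal_pow hcc0]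
        _ = (n + 1 : ℝ≥0∞) * ENNReal.ofReal (cc ^ 2) := by
            rw [Finset.sum_const, Finset.card_range, nsmul_eq_mul]
            norm_num
    have hne0 : ENNReal.ofReal (M₂ ^ 2 * n) ≠ 0 := by
      rw [Ne, ENNReal.ofReal_eq_zero, not_le]
      positivity
    have hmark := meas_ge_le_lintegral_div
      (μ := P) (f := fun ω => ∑ i ∈ Finset.range (n + 1), (‖η i ω‖₊ : ℝ≥0∞) ^ 2)
      (Finset.measurable_sum _ hmeas).aemeasurable hne0 ENNReal.ofReal_ne_top
    refine ENNReal.toReal_le_of_le_ofReal (by positivity) ?_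
    refine hmark.trans ?_
    rw [ENNReal.div_le_iff hne0 ENNReal.ofReal_ne_top]
    refine htot.trans ?_
    have hcast : (n + 1 : ℝ≥0∞) = ENNReal.ofReal ((n:ℝ) + 1) := by
      rw [ENNReal.ofReal_add (Nat.cast_nonneg n) zero_le_one]
      rw [ENNReal.ofReal_natCast, ENNReal.ofReal_one]
    have hmul1 : ENNReal.ofReal ((n:ℝ) + 1) * ENNReal.ofReal (cc ^ 2) =
        ENNReal.ofReal (((n:ℝ) + 1) * cc ^ 2) :=
      (ENNReal.ofReal_mul (by positivity)).symm
    have hmul2 : ENNReal.ofReal (e / 2 * (M₂ ^ 2 * n)) =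
        ENNReal.ofReal (e / 2) * ENNReal.ofReal (M₂ ^ 2 * n) :=
      ENNReal.ofReal_mul (by linarith)
    rw [hcast, hmul1, ← hmul2]
    apply ENNReal.ofReal_le_ofReal
    have hM2e : 4 * cc ^ 2 ≤ M₂ ^ 2 * e := by
      rw [div_le_iff₀ he] at hM₂sq
      linarith
    have hn1 : (1:ℝ) ≤ n := by exact_mod_cast hn
    nlinarith [mul_le_mul_of_nonneg_right hM2e (by linarith : (0:ℝ) ≤ (n:ℝ)),
      mul_nonneg (sq_nonneg cc) (by linarith : (0:ℝ) ≤ (n:ℝ) - 1)]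
  -- ρbar event
  obtain ⟨M₁, hM₁, N₁, hN₁⟩ := hρbar (e / 2) (by linarith)
  -- final constants
  set K₁ : ℝ := Real.sqrt m * A₀ + M₁ * Cd with hK₁def
  have hK₁0 : 0 ≤ K₁ := by
    have h1 : 0 ≤ Real.sqrt m * A₀ := mul_nonneg (Real.sqrt_nonneg _) hA₀0
    have h2 : 0 ≤ M₁ * Cd := mul_nonneg hM₁.le hCd0
    rw [hK₁def]; linarith
  set K₂ : ℝ := (2 + M₁) * (Cd + Mμ + M₂) with hK₂def
  have hK₂0 : 0 ≤ K₂ := by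
    rw [hK₂def]
    apply mul_nonneg (by linarith) (by linarith)
  clear_value K₁ K₂
  refine ⟨2 * K₁ ^ 2 + 4 * K₁ * K₂ + 1, by positivity, max N₁ 1, ?_⟩
  intro n hn
  have hnN₁ : N₁ ≤ n := le_trans (le_max_left _ _) hn
  have hn1 : 1 ≤ n := le_trans (le_max_right _ _) hn
  have hn0 : (0:ℝ) < n := by exact_mod_cast hn1
  have hsn : 0 < Real.sqrt n := Real.sqrt_pos.2 hn0
  have hsn1 : 1 ≤ Real.sqrt n := by
    rw [show (1:ℝ) = Real.sqrt 1 by simp]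
    exact Real.sqrt_le_sqrt (by exact_mod_cast hn1)
  set A₁ : Set Ω := {ω | M₁ * (1 / Real.sqrt n) < |ρbar n ω - ρ|} with hA₁def
  set A₂ : Set Ω := {ω | ENNReal.ofReal (M₂ ^ 2 * n) ≤
    ∑ i ∈ Finset.range (n + 1), (‖η i ω‖₊ : ℝ≥0∞) ^ 2} with hA₂def
  have hP1 : (P A₁).toReal ≤ e / 2 := hN₁ n hnN₁
  have hP2 : (P A₂).toReal ≤ e / 2 := hA2 n hn1
  refine le_trans (ENNReal.toReal_mono (measure_ne_top P (A₁ ∪ A₂))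
    (measure_mono ?_)) ?_
  · -- the bad event is contained in A₁ ∪ A₂
    intro ω hω
    rw [Set.mem_union]
    by_contra hcon
    push_neg at hcon
    obtain ⟨hc1, hc2⟩ := hcon
    rw [Set.mem_setOf_eq] at hω
    apply absurd hω
    rw [not_lt]
    -- bounds from the good event
    have hR : |ρbar n ω - ρ| ≤ M₁ * (1 / Real.sqrt n) := by
      have hh := hc1
      rw [hA₁def, Set.mem_setOf_eq, not_lt] at hh
      exact hh
    have hR' : |ρbar n ω - ρ| ≤ M₁ := by
      refine hR.trans ?_
      rw [mul_one_div]
      exact div_le_self hM₁.le hsn1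
    have hS : ∑ i ∈ Finset.range (n + 1), (η i ω) ^ 2 ≤ M₂ ^ 2 * n := by
      rw [hA₂def, Set.mem_setOf_eq, not_le] at hc2
      have hofr : (∑ i ∈ Finset.range (n + 1), (‖η i ω‖₊ : ℝ≥0∞) ^ 2) =
          ENNReal.ofReal (∑ i ∈ Finset.range (n + 1), (η i ω) ^ 2) := by
        rw [ENNReal.ofReal_sum_of_nonneg (fun i _ => sq_nonneg _)]
        apply Finset.sum_congr rfl
        intro i _
        rw [← enorm_eq_nnnorm, Real.enorm_eq_ofReal_abs, ← ENNReal.ofReal_pow (abs_nonneg _), sq_abs]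
      rw [hofr] at hc2
      have hlt := (ENNReal.ofReal_lt_ofReal_iff_of_nonneg
        (Finset.sum_nonneg fun i _ => sq_nonneg _)).1 hc2
      linarith
    -- |Δs| bound
    have hΔa : ∀ i, |Δs n i| ≤ A₀ := by
      intro i
      by_cases hex : ∃ k : Fin m, i = tstar n k.castSucc.succ + 1
      · obtain ⟨k, hk⟩ := hex
        rw [hk, hΔ1 n k, hA₀def]
        rw [abs_mul, abs_neg]
        apply mul_le_mul_of_nonneg_left _ (abs_nonneg ρ)
        exact Finset.single_le_sum (f := fun k : Fin m => |μ k.succ - μ k.castSucc|)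
          (fun _ _ => abs_nonneg _) (Finset.mem_univ k)
      · push_neg at hex
        rw [hΔ2 n i hex, abs_zero]
        exact hA₀0
    -- |z - y| bound
    have hzyb : ∀ i, |z n i ω - y n i ω| ≤ Cd := by
      intro i
      induction i with
      | zero => rw [hz0]; simpa using hCd0
      | succ i ih =>
        have hstep : z n (i + 1) ω - y n (i + 1) ω =
            Δs n (i + 1) + ρ * (z n i ω - y n i ω) := by
          rw [hzrec n i ω]; ring
        rw [hstep]
        calc |Δs n (i + 1) + ρ * (z n i ω - y n i ω)|
            ≤ |Δs n (i + 1)| + |ρ| * |z n i ω - y n i ω| := by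
              refine (abs_add_le _ _).trans ?_
              rw [abs_mul]
          _ ≤ A₀ + a * Cd := by
              refine add_le_add (hΔa _) ?_
              rw [hadef]
              exact mul_le_mul_of_nonneg_left ih (abs_nonneg ρ)
          _ = Cd := by rw [hCddef]; field_simp; ring
    -- segment bound for y
    have hseg : ∀ i, i ≤ n → |y n i ω - η i ω| ≤ Mμ := by
      intro i hi
      rcases Nat.eq_zero_or_pos i with h0i | h0i
      · rw [h0i, hy0]
        rw [hMμdef]
        simpa using Finset.single_le_sum (f := fun k : Fin (m + 1) => |μ k|)
          (fun _ _ => abs_nonneg _) (Finset.mem_univ 0)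
      · have h0' : tstar n 0 = 0 := by rw [htstardef, hτ0]; simp
        have hlast' : tstar n (Fin.last (m + 1)) = n := by rw [htstardef, hτ1]; simp
        obtain ⟨k, hk1, hk2⟩ := exists_seg (tstar n) h0' hlast' i h0i hi
        rw [hyseg n k i hk1 hk2 ω, hMμdef]
        simpa using Finset.single_le_sum (f := fun k : Fin (m + 1) => |μ k|)
          (fun _ _ => abs_nonneg _) (Finset.mem_univ k)
    -- norm bound for the Δ̄ vector
    have hΔv : ‖vecOf n (fun i =>
        Δs n i + (ρ - ρbar n ω) * (z n (i - 1) ω - y n (i - 1) ω))‖ ≤ K₁ := by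
      set D : EuclideanSpace ℝ (Fin n) := WithLp.toLp 2 (fun i => Δs n ((i : ℕ) + 1)) with hDdef
      set G : EuclideanSpace ℝ (Fin n) :=
        WithLp.toLp 2 (fun i => z n (i : ℕ) ω - y n (i : ℕ) ω) with hGdef
      have hdecomp : vecOf n (fun i =>
          Δs n i + (ρ - ρbar n ω) * (z n (i - 1) ω - y n (i - 1) ω)) =
          D + (ρ - ρbar n ω) • G := by
        ext i
        show Δs n ((i : ℕ) + 1) + (ρ - ρbar n ω) *
            (z n ((i : ℕ) + 1 - 1) ω - y n ((i : ℕ) + 1 - 1) ω) =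
          D i + (ρ - ρbar n ω) * G i
        rw [hDdef, hGdef]
        simp
      have hDn : ‖D‖ ≤ Real.sqrt m * A₀ := by
        have hsum : ∑ i : Fin n, (D i) ^ 2 ≤ m * A₀ ^ 2 := by
          set T : Finset (Fin n) := Finset.univ.filter
            (fun i : Fin n => ∃ k : Fin m, (i : ℕ) + 1 = tstar n k.castSucc.succ + 1) with hT
          have hsplit : ∑ i : Fin n, (D i) ^ 2 = ∑ i ∈ T, (D i) ^ 2 := by
            rw [hT]
            rw [← Finset.sum_filter_add_sum_filter_not Finset.univ
              (fun i : Fin n => ∃ k : Fin m, (i : ℕ) + 1 = tstar n k.castSucc.succ + 1)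
              (fun i => (D i) ^ 2)]
            have hzero : ∑ i ∈ Finset.univ.filter
                (fun i : Fin n => ¬ ∃ k : Fin m, (i : ℕ) + 1 = tstar n k.castSucc.succ + 1),
                (D i) ^ 2 = 0 := by
              apply Finset.sum_eq_zero
              intro i hi
              have hnex := (Finset.mem_filter.1 hi).2
              push_neg at hnex
              rw [hDdef]
              simp only
              rw [hΔ2 n ((i : ℕ) + 1) hnex]
              simp
            rw [hzero, add_zero]
          have hcard : T.card ≤ m := by
            have hinj := Finset.card_le_card_of_injOn
              (f := fun i : Fin n => if h : ∃ k : Fin m,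
                (i : ℕ) + 1 = tstar n k.castSucc.succ + 1 then h.choose else ⟨0, hm⟩)
              (s := T) (t := (Finset.univ : Finset (Fin m)))
              (fun _ _ => Finset.mem_univ _) ?_
            · simpa using hinj
            · intro i hi j hj hij
              have hi' := (Finset.mem_filter.1 (Finset.mem_coe.1 hi)).2
              have hj' := (Finset.mem_filter.1 (Finset.mem_coe.1 hj)).2
              dsimp only at hij
              rw [dif_pos hi', dif_pos hj'] at hij
              have hispec := hi'.choose_spec
              have hjspec := hj'.choose_spec
              rw [hij] at hispec
              apply Fin.ext
              omega
          have hle : ∑ i ∈ T, (D i) ^ 2 ≤ (m : ℝ) * A₀ ^ 2 :=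
            calc ∑ i ∈ T, (D i) ^ 2 ≤ ∑ _i ∈ T, A₀ ^ 2 := by
                  apply Finset.sum_le_sum
                  intro i _
                  calc (D i) ^ 2 = |D i| ^ 2 := (sq_abs _).symm
                    _ ≤ A₀ ^ 2 := by
                      apply pow_le_pow_left₀ (abs_nonneg _) _ 2
                      rw [hDdef]
                      exact hΔa _
              _ = T.card * A₀ ^ 2 := by rw [Finset.sum_const, nsmul_eq_mul]
              _ ≤ m * A₀ ^ 2 := by
                  apply mul_le_mul_of_nonneg_right _ (sq_nonneg A₀)
                  exact_mod_cast hcard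
          rw [hsplit]
          exact hle
        have hnm := norm_le_sqrt_of_sq_sum D _ hsum
        rwa [Real.sqrt_mul (Nat.cast_nonneg m), Real.sqrt_sq hA₀0] at hnm
      have hGn : ‖G‖ ≤ Real.sqrt n * Cd := by
        apply norm_le_of_coord G Cd hCd0
        intro i
        rw [hGdef]
        exact hzyb _
      rw [hdecomp]
      calc ‖D + (ρ - ρbar n ω) • G‖
          ≤ ‖D‖ + ‖(ρ - ρbar n ω) • G‖ := norm_add_le _ _
        _ = ‖D‖ + |ρ - ρbar n ω| * ‖G‖ := by rw [norm_smul, Real.norm_eq_abs]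
        _ ≤ Real.sqrt m * A₀ + (M₁ * (1 / Real.sqrt n)) * (Real.sqrt n * Cd) := by
            apply add_le_add hDn
            apply mul_le_mul _ hGn (norm_nonneg G) (by positivity)
            rw [abs_sub_comm]
            exact hR
        _ = K₁ := by
            rw [hK₁def]
            field_simp
    -- norm bound for the w̄ vector
    have hwv : ‖decor n (fun i => z n i ω) (ρbar n ω)‖ ≤ K₂ * Real.sqrt n := by
      have hH1 : ∑ i : Fin n, (η ((i : ℕ) + 1) ω) ^ 2 ≤ M₂ ^ 2 * n := by
        calc ∑ i : Fin n, (η ((i : ℕ) + 1) ω) ^ 2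
            = ∑ i ∈ Finset.range n, (η (i + 1) ω) ^ 2 :=
              Fin.sum_univ_eq_sum_range (fun i => (η (i + 1) ω) ^ 2) n
          _ ≤ ∑ i ∈ Finset.range (n + 1), (η i ω) ^ 2 := by
              rw [Finset.sum_range_succ']
              have := sq_nonneg (η 0 ω)
              linarith
          _ ≤ M₂ ^ 2 * n := hS
      have hH0 : ∑ i : Fin n, (η (i : ℕ) ω) ^ 2 ≤ M₂ ^ 2 * n := by
        calc ∑ i : Fin n, (η (i : ℕ) ω) ^ 2
            = ∑ i ∈ Finset.range n, (η i ω) ^ 2 :=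
              Fin.sum_univ_eq_sum_range (fun i => (η i ω) ^ 2) n
          _ ≤ ∑ i ∈ Finset.range (n + 1), (η i ω) ^ 2 :=
              Finset.sum_le_sum_of_subset_of_nonneg
                (Finset.range_subset_range.2 (Nat.le_succ n)) (fun _ _ _ => sq_nonneg _)
          _ ≤ M₂ ^ 2 * n := hS
      have hsqrtM : Real.sqrt (M₂ ^ 2 * n) = M₂ * Real.sqrt n := by
        rw [Real.sqrt_mul (sq_nonneg M₂), Real.sqrt_sq hM₂.le]
      set B : ℝ := Real.sqrt n * Cd + Real.sqrt n * Mμ + M₂ * Real.sqrt n with hBdef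
      have hZ1 : ‖vecOf n (fun i => z n i ω)‖ ≤ B := by
        have hdec : vecOf n (fun i => z n i ω) =
            (WithLp.toLp 2 (fun i : Fin n => z n ((i : ℕ) + 1) ω - y n ((i : ℕ) + 1) ω) +
             WithLp.toLp 2 (fun i : Fin n => y n ((i : ℕ) + 1) ω - η ((i : ℕ) + 1) ω)) +
            WithLp.toLp 2 (fun i : Fin n => η ((i : ℕ) + 1) ω) := by
          ext i
          show z n ((i : ℕ) + 1) ω = _
          simp [Pi.add_apply]
        rw [hdec, hBdef]
        refine (norm_add_le _ _).trans ?_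
        refine add_le_add ((norm_add_le _ _).trans (add_le_add ?_ ?_)) ?_
        · exact norm_le_of_coord _ Cd hCd0 (fun i => hzyb _)
        · exact norm_le_of_coord _ Mμ hMμ0 (fun i => hseg _ i.isLt)
        · have hnm := norm_le_sqrt_of_sq_sum
            (WithLp.toLp 2 (fun i : Fin n => η ((i : ℕ) + 1) ω)) _ hH1
          rwa [hsqrtM] at hnm
      have hZ0 : ‖bvecOf n (fun i => z n i ω)‖ ≤ B := by
        have hdec : bvecOf n (fun i => z n i ω) =
            (WithLp.toLp 2 (fun i : Fin n => z n (i : ℕ) ω - y n (i : ℕ) ω) +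
             WithLp.toLp 2 (fun i : Fin n => y n (i : ℕ) ω - η (i : ℕ) ω)) +
            WithLp.toLp 2 (fun i : Fin n => η (i : ℕ) ω) := by
          ext i
          show z n (i : ℕ) ω = _
          simp [Pi.add_apply]
        rw [hdec, hBdef]
        refine (norm_add_le _ _).trans ?_
        refine add_le_add ((norm_add_le _ _).trans (add_le_add ?_ ?_)) ?_
        · exact norm_le_of_coord _ Cd hCd0 (fun i => hzyb _)
        · exact norm_le_of_coord _ Mμ hMμ0 (fun i => hseg _ (le_of_lt i.isLt))
        · have hnm := norm_le_sqrt_of_sq_sum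
            (WithLp.toLp 2 (fun i : Fin n => η (i : ℕ) ω)) _ hH0
          rwa [hsqrtM] at hnm
      have hρb : |ρbar n ω| ≤ 1 + M₁ := by
        have habs : |ρbar n ω| ≤ |ρ| + |ρbar n ω - ρ| := by
          calc |ρbar n ω| = |ρ + (ρbar n ω - ρ)| := by ring_nf
            _ ≤ |ρ| + |ρbar n ω - ρ| := abs_add_le _ _
        have h2 : |ρ| < 1 := abs_lt.2 ⟨hρ₁, hρ₂⟩
        linarith
      have hB0 : 0 ≤ B := by
        rw [hBdef]
        have b1 : 0 ≤ Real.sqrt n * Cd := mul_nonneg hsn.le hCd0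
        have b2 : 0 ≤ Real.sqrt n * Mμ := mul_nonneg hsn.le hMμ0
        have b3 : 0 ≤ M₂ * Real.sqrt n := mul_nonneg hM₂.le hsn.le
        linarith
      calc ‖decor n (fun i => z n i ω) (ρbar n ω)‖
          = ‖vecOf n (fun i => z n i ω) - ρbar n ω • bvecOf n (fun i => z n i ω)‖ := rfl
        _ ≤ ‖vecOf n (fun i => z n i ω)‖ + ‖ρbar n ω • bvecOf n (fun i => z n i ω)‖ :=
            norm_sub_le _ _
        _ = ‖vecOf n (fun i => z n i ω)‖ + |ρbar n ω| * ‖bvecOf n (fun i => z n i ω)‖ := by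
            rw [norm_smul, Real.norm_eq_abs]
        _ ≤ B + (1 + M₁) * B := by
            refine add_le_add hZ1 ?_
            exact mul_le_mul hρb hZ0 (norm_nonneg _) (by linarith)
        _ = K₂ * Real.sqrt n := by
            rw [hK₂def, hBdef]
            ring
    -- conclude with the uniform per-configuration bound
    refine isup_abs_bound _ (Anm n m)
      ((2 * K₁ ^ 2 + 4 * K₁ * K₂ + 1) * (1 / Real.sqrt n)) (by positivity) ?_
    intro t
    refine (per_t_bound n m (tstar n) t _ _).trans ?_
    rw [div_le_iff₀ hn0]
    have hmm : (1 / Real.sqrt n) * n = Real.sqrt n := by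
      rw [div_mul_eq_mul_div, one_mul, div_eq_iff hsn.ne']
      exact (Real.mul_self_sqrt hn0.le).symm
    have hx := hΔv
    have hw := hwv
    set X := ‖vecOf n (fun i =>
      Δs n i + (ρ - ρbar n ω) * (z n (i - 1) ω - y n (i - 1) ω))‖ with hXdef
    set Wn := ‖decor n (fun i => z n i ω) (ρbar n ω)‖ with hWndef
    have hX0 : 0 ≤ X := norm_nonneg _
    have hW0 : 0 ≤ Wn := norm_nonneg _
    have hXsq : X ^ 2 ≤ K₁ ^ 2 := pow_le_pow_left₀ hX0 hx 2
    have hWX : Wn * X ≤ (K₂ * Real.sqrt n) * K₁ :=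
      mul_le_mul hw hx hX0 (by positivity)
    have e1 : 2 * K₁ ^ 2 * 1 ≤ 2 * K₁ ^ 2 * Real.sqrt n :=
      mul_le_mul_of_nonneg_left hsn1 (by positivity)
    calc 2 * X ^ 2 + 4 * Wn * X
        ≤ 2 * K₁ ^ 2 + 4 * (K₂ * Real.sqrt n) * K₁ := by linarith [hXsq, hWX]
      _ ≤ (2 * K₁ ^ 2 + 4 * K₁ * K₂ + 1) * (1 / Real.sqrt n) * n := by
          rw [mul_assoc (2 * K₁ ^ 2 + 4 * K₁ * K₂ + 1) (1 / Real.sqrt n) (n:ℝ), hmm]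
          linarith [e1, hsn.le]
  · calc (P (A₁ ∪ A₂)).toReal
        ≤ (P A₁ + P A₂).toReal := by
          apply ENNReal.toReal_mono
          · exact ENNReal.add_ne_top.2 ⟨measure_ne_top _ _, measure_ne_top _ _⟩
          · exact measure_union_le _ _
      _ = (P A₁).toReal + (P A₂).toReal :=
          ENNReal.toReal_add (measure_ne_top _ _) (measure_ne_top _ _)
      _ ≤ e / 2 + e / 2 := add_le_add hP1 hP2
      _ = e := by ring
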